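/- In the Euclidean plane E := EuclideanSpace ℝ (Fin 2), let x, y, z be lines (affine subspaces whose direction has finrank 1). Say two lines intersect when they are distinct and have a common point. If x and y intersect, then z intersects x or z intersects y. -/
import Mathlib

/-- Two lines intersect: they are distinct and have a common point. -/
def IntersectingLines (x y : AffineSubspace ℝ (EuclideanSpace ℝ (Fin 2))) : Prop :=
  x ≠ y ∧ ∃ A : EuclideanSpace ℝ (Fin 2), A ∈ x ∧ A ∈ y

private lemma line_nonempty (l : AffineSubspace ℝ (EuclideanSpace ℝ (Fin 2)))
    (h : Module.finrank ℝ l.direction = 1) : (l : Set (EuclideanSpace ℝ (Fin 2))).Nonempty := by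
  rw [AffineSubspace.nonempty_iff_ne_bot]
  rintro rfl
  rw [AffineSubspace.direction_bot] at h
  simp at h

private lemma lines_meet (l₁ l₂ : AffineSubspace ℝ (EuclideanSpace ℝ (Fin 2)))
    (h₁ : Module.finrank ℝ l₁.direction = 1)
    (h₂ : Module.finrank ℝ l₂.direction = 1)
    (hd : l₁.direction ≠ l₂.direction) :
    IntersectingLines l₁ l₂ := by
  obtain ⟨p, hp⟩ := line_nonempty l₁ h₁
  obtain ⟨q, hq⟩ := line_nonempty l₂ h₂
  have hinf : l₁.direction ⊓ l₂.direction = ⊥ := by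
    by_contra hb
    have h1 : l₁.direction ⊓ l₂.direction = l₁.direction := by
      apply Submodule.eq_of_le_of_finrank_le inf_le_left
      rw [h₁]
      have := Submodule.one_le_finrank_iff.mpr hb
      omega
    have h2 : l₁.direction ⊓ l₂.direction = l₂.direction := by
      apply Submodule.eq_of_le_of_finrank_le inf_le_right
      rw [h₂]
      have := Submodule.one_le_finrank_iff.mpr hb
      omega
    exact hd (h1 ▸ h2)
  have hsup : l₁.direction ⊔ l₂.direction = ⊤ := by
    apply Submodule.eq_top_of_finrank_eq
    have := Submodule.finrank_sup_add_finrank_inf_eq l₁.direction l₂.direction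
    rw [hinf, h₁, h₂] at this
    simp at this
    simp [this]
  have hmem : q -ᵥ p ∈ l₁.direction ⊔ l₂.direction := by rw [hsup]; trivial
  obtain ⟨v₁, hv₁, v₂, hv₂, hv⟩ := Submodule.mem_sup.mp hmem
  refine ⟨fun he => hd (by rw [he]), v₁ +ᵥ p, AffineSubspace.vadd_mem_of_mem_direction hv₁ hp, ?_⟩
  have : v₁ +ᵥ p = (-v₂) +ᵥ q := by
    simp only [vadd_eq_add]
    have hq' : v₁ + v₂ + p = q := eq_sub_iff_add_eq.mp hv
    rw [← hq']
    abel
  rw [this]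
  exact AffineSubspace.vadd_mem_of_mem_direction (Submodule.neg_mem _ hv₂) hq

theorem intersects_cotransitive
    (x y z : AffineSubspace ℝ (EuclideanSpace ℝ (Fin 2)))
    (hx : Module.finrank ℝ x.direction = 1)
    (hy : Module.finrank ℝ y.direction = 1)
    (hz : Module.finrank ℝ z.direction = 1)
    (hxy : IntersectingLines x y) :
    IntersectingLines z x ∨ IntersectingLines z y := by
  obtain ⟨hne, A, hAx, hAy⟩ := hxy
  by_cases hzx : z = x
  · exact Or.inr ⟨hzx ▸ hne, A, hzx ▸ hAx, hAy⟩
  by_cases hzy : z = y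
  · exact Or.inl ⟨fun h => hne ((hzy ▸ h).symm), A, hzy ▸ hAy, hAx⟩
  by_cases hd : z.direction = x.direction
  · have hdy : z.direction ≠ y.direction := by
      intro h
      exact hne ((AffineSubspace.eq_iff_direction_eq_of_mem hAx hAy).mpr (hd ▸ h))
    exact Or.inr (lines_meet z y hz hy hdy)
  · exact Or.inl (lines_meet z x hz hx hd)
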